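/- Let φ = (1+√5)/2, let 2φ < β < 4, and let T : ℝ → ℝ be defined by T(x) = x + 2 if x ≤ 0 and T(x) = β − φ·x if x > 0. Then there exists a T-invariant Borel probability measure μ on ℝ, absolutely continuous with respect to Lebesgue measure, such that the Lyapunov exponent of T with respect to μ satisfies ∫ log |deriv T(x)| dμ(x) = ((3−φ)/(5−2φ))·log φ. In particular this value is independent of β in the range (2φ, 4). -/

import Mathlib

open MeasureTheory Set

private noncomputable def R (a b : ℝ) : Measure ℝ := volume.restrict (Set.Ioc a b)

private lemma R_univ (a b : ℝ) : R a b Set.univ = ENNReal.ofReal (b - a) := by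
  simp [R, Real.volume_Ioc]

private lemma Rsplit {a b c : ℝ} (h1 : a ≤ b) (h2 : b ≤ c) : R a c = R a b + R b c := by
  rw [R, R, R, ← Ioc_union_Ioc_eq_Ioc h1 h2,
    Measure.restrict_union (Ioc_disjoint_Ioc_of_le le_rfl) measurableSet_Ioc]

private lemma R_le_volume (a b : ℝ) (s : Set ℝ) : R a b s ≤ volume s :=
  Measure.restrict_apply_le _ _

private lemma R_Ioi_pos {a b : ℝ} (ha : 0 ≤ a) : R a b (Set.Ioi 0) = ENNReal.ofReal (b - a) := by
  rw [R, Measure.restrict_apply measurableSet_Ioi]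
  have hsub : Set.Ioc a b ⊆ Set.Ioi 0 := fun x hx => lt_of_le_of_lt ha hx.1
  rw [Set.inter_eq_self_of_subset_right hsub]
  simp [Real.volume_Ioc]

private lemma R_Ioi_neg {a b : ℝ} (hb : b ≤ 0) : R a b (Set.Ioi 0) = 0 := by
  rw [R, Measure.restrict_apply measurableSet_Ioi]
  convert measure_empty
  · ext x
    simp only [Set.mem_inter_iff, Set.mem_Ioi, Set.mem_Ioc, Set.mem_empty_iff_false, iff_false,
      not_and, and_imp]
    intro h1 h2 h3
    linarith
  · infer_instance

private lemma map_add_two (a b : ℝ) :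
    Measure.map (fun x : ℝ => x + 2) (R a b) = R (a + 2) (b + 2) := by
  have hg : Measurable (fun x : ℝ => x + 2) := measurable_id.add_const 2
  refine Measure.ext fun t ht => ?_
  rw [R, R, Measure.map_apply hg ht, Measure.restrict_apply (hg ht),
    Measure.restrict_apply ht]
  have hpre : (fun x : ℝ => x + 2) ⁻¹' t ∩ Ioc a b
      = (fun x : ℝ => x + 2) ⁻¹' (t ∩ Ioc (a + 2) (b + 2)) := by
    ext x
    simp only [mem_inter_iff, mem_preimage, mem_Ioc]
    constructor
    · rintro ⟨h1, h2, h3⟩; exact ⟨h1, by linarith, by linarith⟩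
    · rintro ⟨h1, h2, h3⟩; exact ⟨h1, by linarith, by linarith⟩
  rw [hpre, ← Measure.map_apply hg (ht.inter measurableSet_Ioc),
    map_add_right_eq_self volume 2]

private lemma map_affine {s : ℝ} (hs : 0 < s) (c a b : ℝ) :
    Measure.map (fun x : ℝ => c - s * x) (R a b)
      = ENNReal.ofReal s⁻¹ • R (c - s * b) (c - s * a) := by
  have hg : Measurable (fun x : ℝ => c - s * x) :=
    measurable_const.sub (measurable_id.const_mul s)
  have hmap : Measure.map (fun x : ℝ => c - s * x) volume
      = ENNReal.ofReal s⁻¹ • volume := by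
    have h1 : (fun x : ℝ => c - s * x) = (fun y : ℝ => y + c) ∘ (fun x : ℝ => (-s) * x) := by
      funext x; simp; ring
    have hgadd : Measurable (fun y : ℝ => y + c) := measurable_id.add_const c
    have hgmul : Measurable (fun x : ℝ => (-s) * x) := measurable_const_mul (-s)
    rw [h1, ← Measure.map_map hgadd hgmul,
      Real.map_volume_mul_left (by linarith : (-s) ≠ 0), Measure.map_smul,
      map_add_right_eq_self volume c]
    congr 1
    rw [abs_inv, abs_neg, abs_of_pos hs]
  have hIco : R a b = volume.restrict (Ico a b) := by
    rw [R]
    exact (Measure.restrict_congr_set Ioo_ae_eq_Ioc).symm.trans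
      (Measure.restrict_congr_set Ioo_ae_eq_Ico)
  rw [hIco, R]
  refine Measure.ext fun t ht => ?_
  rw [Measure.map_apply hg ht, Measure.restrict_apply (hg ht),
    Measure.smul_apply, Measure.restrict_apply ht]
  have hpre : (fun x : ℝ => c - s * x) ⁻¹' t ∩ Ico a b
      = (fun x : ℝ => c - s * x) ⁻¹' (t ∩ Ioc (c - s * b) (c - s * a)) := by
    ext x
    simp only [mem_inter_iff, mem_preimage, mem_Ico, mem_Ioc]
    constructor
    · rintro ⟨h1, h2, h3⟩
      refine ⟨h1, ?_, ?_⟩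
      · nlinarith
      · nlinarith
    · rintro ⟨h1, h2, h3⟩
      refine ⟨h1, ?_, ?_⟩
      · nlinarith
      · nlinarith
  rw [hpre, ← Measure.map_apply hg (ht.inter measurableSet_Ioc), hmap,
    Measure.smul_apply]

private lemma mapT_left {T : ℝ → ℝ} {β φ : ℝ}
    (hT : T = fun x => if x ≤ 0 then x + 2 else β - φ * x) {a b : ℝ} (hb : b ≤ 0) :
    Measure.map T (R a b) = R (a + 2) (b + 2) := by
  have h1 : Measure.map T (R a b) = Measure.map (fun x : ℝ => x + 2) (R a b) := by
    apply Measure.map_congr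
    have h2 : ∀ᵐ x ∂(R a b), x ∈ Set.Ioc a b := by
      rw [R]; exact ae_restrict_mem measurableSet_Ioc
    filter_upwards [h2] with x hx
    rw [hT]
    exact if_pos (hx.2.trans hb)
  rw [h1, map_add_two]

private lemma mapT_right {T : ℝ → ℝ} {β φ : ℝ} (hφ : 0 < φ)
    (hT : T = fun x => if x ≤ 0 then x + 2 else β - φ * x) {a b : ℝ} (ha : 0 ≤ a) :
    Measure.map T (R a b) = ENNReal.ofReal φ⁻¹ • R (β - φ * b) (β - φ * a) := by
  have h1 : Measure.map T (R a b) = Measure.map (fun x : ℝ => β - φ * x) (R a b) := by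
    apply Measure.map_congr
    have h2 : ∀ᵐ x ∂(R a b), x ∈ Set.Ioc a b := by
      rw [R]; exact ae_restrict_mem measurableSet_Ioc
    filter_upwards [h2] with x hx
    rw [hT]
    exact if_neg (not_le.mpr (lt_of_le_of_lt ha hx.1))
  rw [h1, map_affine hφ]
open MeasureTheory

set_option maxHeartbeats 2000000

theorem lyapunov_plateau_s_phi (φ β : ℝ) (hφ : φ = (1 + Real.sqrt 5) / 2)
    (hβ₁ : 2 * φ < β) (hβ₂ : β < 4)
    (T : ℝ → ℝ) (hT : T = fun x => if x ≤ 0 then x + 2 else β - φ * x) :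
    ∃ μ : Measure ℝ, IsProbabilityMeasure μ ∧ μ.map T = μ ∧ μ ≪ volume ∧
      ∫ x, Real.log |deriv T x| ∂μ = ((3 - φ) / (5 - 2 * φ)) * Real.log φ := by
  -- basic facts about φ
  have h5 : Real.sqrt 5 ^ 2 = 5 := Real.sq_sqrt (by norm_num)
  have h5lb : 2.2 < Real.sqrt 5 := by nlinarith [Real.sqrt_nonneg 5]
  have h5ub : Real.sqrt 5 < 2.3 := by nlinarith [Real.sqrt_nonneg 5]
  have hφ2 : φ ^ 2 = φ + 1 := by rw [hφ]; linear_combination (1/4) * h5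
  have hφ3 : φ ^ 3 = 2 * φ + 1 := by linear_combination (φ + 1) * hφ2
  have hφlb : 1.6 < φ := by rw [hφ]; linarith
  have hφub : φ < 1.7 := by rw [hφ]; linarith
  have hφpos : (0:ℝ) < φ := by linarith
  have hφne : φ ≠ 0 := ne_of_gt hφpos
  have hφ0 : (0:ℝ) ≤ φ := le_of_lt hφpos
  have hφ20 : (0:ℝ) ≤ φ ^ 2 := by positivity
  have hφ30 : (0:ℝ) ≤ φ ^ 3 := by positivity
  have h2φ20 : (0:ℝ) ≤ 2 * φ ^ 2 := by positivity
  -- the breakpoints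
  obtain ⟨B1, hB1⟩ : ∃ x : ℝ, x = β - φ * β := ⟨_, rfl⟩
  obtain ⟨B2, hB2⟩ : ∃ x : ℝ, x = β - φ * β + 2 := ⟨_, rfl⟩
  obtain ⟨B3, hB3⟩ : ∃ x : ℝ, x = β - φ * β + 4 := ⟨_, rfl⟩
  obtain ⟨C1, hC1⟩ : ∃ x : ℝ, x = β - 2 * φ := ⟨_, rfl⟩
  obtain ⟨C2, hC2⟩ : ∃ x : ℝ, x = β - φ * β + 2 * φ ^ 2 := ⟨_, rfl⟩
  obtain ⟨C3, hC3⟩ : ∃ x : ℝ, x = 2 * β - 2 * φ ^ 3 := ⟨_, rfl⟩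
  obtain ⟨M, hM⟩ : ∃ x : ℝ, x = 2 * β - 4 * φ := ⟨_, rfl⟩
  obtain ⟨Q, hQ⟩ : ∃ x : ℝ, x = β * (1 - 2 * φ) + 4 * φ + 4 := ⟨_, rfl⟩
  -- ordering of the breakpoints
  have oB1C3 : B1 < C3 := by
    rw [hB1, hC3]
    nlinarith [mul_lt_mul_of_pos_right hβ₁ (show (0:ℝ) < 1 + φ by linarith), hφ2, hφ3]
  have oC3B2 : C3 < B2 := by
    rw [hC3, hB2]
    nlinarith [mul_lt_mul_of_pos_right hβ₂ (show (0:ℝ) < 1 + φ by linarith), hφ2, hφ3]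
  have oB20 : B2 < 0 := by
    rw [hB2]
    nlinarith [mul_lt_mul_of_pos_right hβ₁ (show (0:ℝ) < φ - 1 by linarith), hφ2]
  have o0C1 : (0:ℝ) < C1 := by rw [hC1]; linarith
  have oC1M : C1 < M := by rw [hC1, hM]; linarith
  have oMB3 : M < B3 := by
    rw [hM, hB3]
    nlinarith [mul_lt_mul_of_pos_right hβ₂ (show (0:ℝ) < 1 + φ by linarith), hφ2, hφ3]
  have oB32 : B3 < 2 := by
    rw [hB3]
    nlinarith [mul_lt_mul_of_pos_right hβ₁ (show (0:ℝ) < φ - 1 by linarith), hφ2]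
  have o2C2 : (2:ℝ) < C2 := by
    rw [hC2]
    nlinarith [mul_lt_mul_of_pos_right hβ₂ (show (0:ℝ) < φ - 1 by linarith), hφ2]
  have oC2β : C2 < β := by
    rw [hC2]
    nlinarith [mul_lt_mul_of_pos_left hβ₁ hφpos, hφ2]
  have oMQ : M < Q := by
    rw [hM, hQ]
    nlinarith [mul_lt_mul_of_pos_right hβ₂ (show (0:ℝ) < 2 * φ + 1 by linarith)]
  have oQC2 : Q < C2 := by
    rw [hQ, hC2]
    nlinarith [mul_lt_mul_of_pos_left hβ₁ hφpos, hφ2]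
  have oC30 : C3 < 0 := lt_trans oC3B2 oB20
  have h0M : (0:ℝ) ≤ M := le_of_lt (lt_trans o0C1 oC1M)
  have h0B3 : (0:ℝ) ≤ B3 := le_trans h0M (le_of_lt oMB3)
  have h0C2 : (0:ℝ) ≤ C2 := by linarith
  -- the invariant measure
  obtain ⟨ν, hν⟩ : ∃ x : Measure ℝ, x = ENNReal.ofReal 1 • R B1 C3 + ENNReal.ofReal φ • R C3 B2
      + ENNReal.ofReal (φ ^ 2) • R B2 0 + ENNReal.ofReal (φ ^ 2) • R 0 C1
      + (ENNReal.ofReal (φ ^ 3) • R C1 M + ENNReal.ofReal (φ ^ 3) • R M B3)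
      + ENNReal.ofReal (2 * φ ^ 2) • R B3 2 + ENNReal.ofReal (φ ^ 2) • R 2 C2
      + ENNReal.ofReal φ • R C2 β := ⟨_, rfl⟩
  obtain ⟨μ, hμ⟩ : ∃ x : Measure ℝ, x = ENNReal.ofReal ((8 * φ + 2)⁻¹) • ν := ⟨_, rfl⟩
  have hinv0 : (0:ℝ) ≤ (8 * φ + 2)⁻¹ := by positivity
  -- absolute continuity
  have hac : μ ≪ volume := by
    intro s hs
    have hR0 : ∀ a b : ℝ, R a b s = 0 := fun a b =>
      le_antisymm (le_trans (R_le_volume a b s) (le_of_eq hs)) zero_le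
    simp [hμ, hν, Measure.smul_apply, Measure.add_apply, hR0]
  -- nonnegativity facts for the lengths
  have n1 : (0:ℝ) ≤ 1 * (C3 - B1) := by nlinarith [oB1C3]
  have n2 : (0:ℝ) ≤ φ * (B2 - C3) := mul_nonneg hφ0 (by linarith)
  have n3 : (0:ℝ) ≤ φ ^ 2 * (0 - B2) := mul_nonneg hφ20 (by linarith)
  have n4 : (0:ℝ) ≤ φ ^ 2 * (C1 - 0) := mul_nonneg hφ20 (by linarith)
  have n5 : (0:ℝ) ≤ φ ^ 3 * (M - C1) := mul_nonneg hφ30 (by linarith)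
  have n6 : (0:ℝ) ≤ φ ^ 3 * (B3 - M) := mul_nonneg hφ30 (by linarith)
  have n7 : (0:ℝ) ≤ 2 * φ ^ 2 * (2 - B3) := mul_nonneg h2φ20 (by linarith)
  have n8 : (0:ℝ) ≤ φ ^ 2 * (C2 - 2) := mul_nonneg hφ20 (by linarith)
  have n9 : (0:ℝ) ≤ φ * (β - C2) := mul_nonneg hφ0 (by linarith)
  have n56 : (0:ℝ) ≤ φ ^ 3 * (M - C1) + φ ^ 3 * (B3 - M) := by linarith
  have p2 : (0:ℝ) ≤ 1 * (C3 - B1) + φ * (B2 - C3) := by linarith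
  have p3 : (0:ℝ) ≤ 1 * (C3 - B1) + φ * (B2 - C3) + φ ^ 2 * (0 - B2) := by linarith
  have p4 : (0:ℝ) ≤ 1 * (C3 - B1) + φ * (B2 - C3) + φ ^ 2 * (0 - B2)
      + φ ^ 2 * (C1 - 0) := by linarith
  have p5 : (0:ℝ) ≤ 1 * (C3 - B1) + φ * (B2 - C3) + φ ^ 2 * (0 - B2)
      + φ ^ 2 * (C1 - 0) + (φ ^ 3 * (M - C1) + φ ^ 3 * (B3 - M)) := by linarith
  have p6 : (0:ℝ) ≤ 1 * (C3 - B1) + φ * (B2 - C3) + φ ^ 2 * (0 - B2)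
      + φ ^ 2 * (C1 - 0) + (φ ^ 3 * (M - C1) + φ ^ 3 * (B3 - M))
      + 2 * φ ^ 2 * (2 - B3) := by linarith
  have p7 : (0:ℝ) ≤ 1 * (C3 - B1) + φ * (B2 - C3) + φ ^ 2 * (0 - B2)
      + φ ^ 2 * (C1 - 0) + (φ ^ 3 * (M - C1) + φ ^ 3 * (B3 - M))
      + 2 * φ ^ 2 * (2 - B3) + φ ^ 2 * (C2 - 2) := by linarith
  have p8 : (0:ℝ) ≤ 1 * (C3 - B1) + φ * (B2 - C3) + φ ^ 2 * (0 - B2)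
      + φ ^ 2 * (C1 - 0) + (φ ^ 3 * (M - C1) + φ ^ 3 * (B3 - M))
      + 2 * φ ^ 2 * (2 - B3) + φ ^ 2 * (C2 - 2) + φ * (β - C2) := by linarith
  -- probability
  have hprob : μ Set.univ = 1 := by
    simp only [hμ, hν, Measure.smul_apply, Measure.add_apply, R_univ, smul_eq_mul]
    simp only [← ENNReal.ofReal_mul, ← ENNReal.ofReal_add, zero_le_one, hφ0, hφ20, hφ30,
      h2φ20, hinv0, n1, n2, n3, n4, n5, n6, n7, n8, n9, n56, p2, p3, p4, p5, p6, p7, p8]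
    have hSsum : 1 * (C3 - B1) + φ * (B2 - C3) + φ ^ 2 * (0 - B2)
        + φ ^ 2 * (C1 - 0) + (φ ^ 3 * (M - C1) + φ ^ 3 * (B3 - M))
        + 2 * φ ^ 2 * (2 - B3) + φ ^ 2 * (C2 - 2) + φ * (β - C2) = 8 * φ + 2 := by
      simp only [hB1, hB2, hB3, hC1, hC2, hC3, hM]
      linear_combination (2 - β + 4 * φ + φ * β + 6 * φ ^ 2 - φ ^ 2 * β) * hφ2
    rw [hSsum, inv_mul_cancel₀ (by linarith : (8 * φ + 2) ≠ 0), ENNReal.ofReal_one]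
  -- endpoint identities
  have eA : B1 + 2 = B2 := by rw [hB1, hB2]
  have eB : C3 + 2 = M := by rw [hC3, hM]; linear_combination (-2) * hφ3
  have eC : B2 + 2 = B3 := by rw [hB2, hB3]; ring
  have eD : (0:ℝ) + 2 = 2 := by norm_num
  have eE : β - φ * C1 = C2 := by rw [hC1, hC2]; ring
  have eF : β - φ * 0 = β := by ring
  have eG : β - φ * M = Q := by rw [hM, hQ]; linear_combination 4 * hφ2
  have eH : β - φ * B3 = M := by rw [hB3, hM]; linear_combination β * hφ2
  have eI : β - φ * 2 = C1 := by rw [hC1]; ring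
  have eJ : β - φ * C2 = C3 := by rw [hC2, hC3]; linear_combination β * hφ2
  -- images of the pieces under T
  have m1 : Measure.map T (R B1 C3) = R B2 M := by
    rw [mapT_left hT (le_of_lt oC30), eA, eB]
  have m2 : Measure.map T (R C3 B2) = R M B3 := by
    rw [mapT_left hT (le_of_lt oB20), eB, eC]
  have m3 : Measure.map T (R B2 0) = R B3 2 := by
    rw [mapT_left hT le_rfl, eC, eD]
  have m4 : Measure.map T (R 0 C1) = ENNReal.ofReal φ⁻¹ • R C2 β := by
    rw [mapT_right hφpos hT le_rfl, eE, eF]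
  have m5 : Measure.map T (R C1 M) = ENNReal.ofReal φ⁻¹ • R Q C2 := by
    rw [mapT_right hφpos hT (le_of_lt o0C1), eG, eE]
  have m6 : Measure.map T (R M B3) = ENNReal.ofReal φ⁻¹ • R M Q := by
    rw [mapT_right hφpos hT h0M, eH, eG]
  have m7 : Measure.map T (R B3 2) = ENNReal.ofReal φ⁻¹ • R C1 M := by
    rw [mapT_right hφpos hT h0B3, eI, eH]
  have m8 : Measure.map T (R 2 C2) = ENNReal.ofReal φ⁻¹ • R C3 C1 := by
    rw [mapT_right hφpos hT (by norm_num : (0:ℝ) ≤ 2), eJ, eI]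
  have m9 : Measure.map T (R C2 β) = ENNReal.ofReal φ⁻¹ • R B1 C3 := by
    rw [mapT_right hφpos hT h0C2, eJ, ← hB1]
  -- coefficient simplifications
  have q4 : ENNReal.ofReal (φ ^ 2) * ENNReal.ofReal φ⁻¹ = ENNReal.ofReal φ := by
    rw [← ENNReal.ofReal_mul hφ20]
    congr 1
    rw [pow_two, mul_assoc, mul_inv_cancel₀ hφne, mul_one]
  have q5 : ENNReal.ofReal (φ ^ 3) * ENNReal.ofReal φ⁻¹ = ENNReal.ofReal (φ ^ 2) := by
    rw [← ENNReal.ofReal_mul hφ30]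
    congr 1
    rw [pow_succ, mul_assoc, mul_inv_cancel₀ hφne, mul_one]
  have q7 : ENNReal.ofReal (2 * φ ^ 2) * ENNReal.ofReal φ⁻¹ = ENNReal.ofReal (2 * φ) := by
    rw [← ENNReal.ofReal_mul h2φ20]
    congr 1
    field_simp
  have q9 : ENNReal.ofReal φ * ENNReal.ofReal φ⁻¹ = ENNReal.ofReal 1 := by
    rw [← ENNReal.ofReal_mul hφ0, mul_inv_cancel₀ hφne]
  -- coefficient expansions
  have E2 : ENNReal.ofReal (φ ^ 2) = ENNReal.ofReal 1 + ENNReal.ofReal φ := by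
    rw [show (φ ^ 2 : ℝ) = 1 + φ by linarith, ENNReal.ofReal_add (by norm_num) hφ0]
  have E3 : ENNReal.ofReal (φ ^ 3) = ENNReal.ofReal 1 + ENNReal.ofReal φ + ENNReal.ofReal φ := by
    rw [show (φ ^ 3 : ℝ) = 1 + φ + φ by linarith, ENNReal.ofReal_add (by linarith) hφ0,
      ENNReal.ofReal_add (by norm_num) hφ0]
  have E22 : ENNReal.ofReal (2 * φ ^ 2)
      = ENNReal.ofReal 1 + ENNReal.ofReal φ + (ENNReal.ofReal 1 + ENNReal.ofReal φ) := by
    rw [show (2 * φ ^ 2 : ℝ) = 1 + φ + (1 + φ) by linarith,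
      ENNReal.ofReal_add (by linarith) (by linarith), ENNReal.ofReal_add (by norm_num) hφ0]
  have E2φ : ENNReal.ofReal (2 * φ) = ENNReal.ofReal φ + ENNReal.ofReal φ := by
    rw [show (2 * φ : ℝ) = φ + φ by ring, ENNReal.ofReal_add hφ0 hφ0]
  -- measurability of T
  have hTm : Measurable T := by
    rw [hT]
    exact Measurable.ite measurableSet_Iic (measurable_id.add_const 2)
      (measurable_const.sub (measurable_id.const_mul φ))
  have hma : ∀ μ1 μ2 : Measure ℝ, Measure.map T (μ1 + μ2)
      = Measure.map T μ1 + Measure.map T μ2 := fun μ1 μ2 => Measure.map_add μ1 μ2 hTm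
  -- the merge across the matching point Q
  have hQmerge : ENNReal.ofReal (φ ^ 2) • R Q C2 + ENNReal.ofReal (φ ^ 2) • R M Q
      = ENNReal.ofReal (φ ^ 2) • R M B3 + ENNReal.ofReal (φ ^ 2) • R B3 2
        + ENNReal.ofReal (φ ^ 2) • R 2 C2 := by
    rw [← smul_add, ← smul_add, ← smul_add]
    congr 1
    rw [add_comm, ← Rsplit (le_of_lt oMQ) (le_of_lt oQC2),
      Rsplit (le_of_lt oMB3) (le_trans (le_of_lt oB32) (le_of_lt o2C2)),
      Rsplit (le_of_lt oB32) (le_of_lt o2C2)]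
    abel
  -- invariance
  have hmapν : Measure.map T ν = ν := by
    rw [hν]
    simp only [hma, Measure.map_smul, m1, m2, m3, m4, m5, m6, m7, m8, m9, smul_smul,
      q4, q5, q7, q9]
    rw [hQmerge]
    rw [show R B2 M = R B2 0 + R 0 C1 + R C1 M by
      rw [Rsplit (le_of_lt oB20) h0M, Rsplit (le_of_lt o0C1) (le_of_lt oC1M)]; abel]
    rw [show R C3 C1 = R C3 B2 + R B2 0 + R 0 C1 by
      rw [Rsplit (le_of_lt oC3B2) (le_of_lt (lt_trans oB20 o0C1)),
        Rsplit (le_of_lt oB20) (le_of_lt o0C1)]; abel]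
    simp only [E2, E3, E22, E2φ, add_smul, smul_add]
    abel
  have hmapT : Measure.map T μ = μ := by
    rw [hμ, Measure.map_smul, hmapν]
  -- measure of the positive half line
  have z1 : R B1 C3 (Set.Ioi 0) = 0 := R_Ioi_neg (le_of_lt oC30)
  have z2 : R C3 B2 (Set.Ioi 0) = 0 := R_Ioi_neg (le_of_lt oB20)
  have z3 : R B2 0 (Set.Ioi 0) = 0 := R_Ioi_neg le_rfl
  have pp4 : R 0 C1 (Set.Ioi 0) = ENNReal.ofReal (C1 - 0) := R_Ioi_pos le_rfl
  have pp5 : R C1 M (Set.Ioi 0) = ENNReal.ofReal (M - C1) := R_Ioi_pos (le_of_lt o0C1)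
  have pp6 : R M B3 (Set.Ioi 0) = ENNReal.ofReal (B3 - M) := R_Ioi_pos h0M
  have pp7 : R B3 2 (Set.Ioi 0) = ENNReal.ofReal (2 - B3) := R_Ioi_pos h0B3
  have pp8 : R 2 C2 (Set.Ioi 0) = ENNReal.ofReal (C2 - 2) := R_Ioi_pos (by norm_num)
  have pp9 : R C2 β (Set.Ioi 0) = ENNReal.ofReal (β - C2) := R_Ioi_pos h0C2
  have d5 : (0:ℝ) ≤ φ ^ 2 * (C1 - 0) + (φ ^ 3 * (M - C1) + φ ^ 3 * (B3 - M)) := by linarith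
  have d6 : (0:ℝ) ≤ φ ^ 2 * (C1 - 0) + (φ ^ 3 * (M - C1) + φ ^ 3 * (B3 - M))
      + 2 * φ ^ 2 * (2 - B3) := by linarith
  have d7 : (0:ℝ) ≤ φ ^ 2 * (C1 - 0) + (φ ^ 3 * (M - C1) + φ ^ 3 * (B3 - M))
      + 2 * φ ^ 2 * (2 - B3) + φ ^ 2 * (C2 - 2) := by linarith
  have hIoi : μ (Set.Ioi (0:ℝ)) = ENNReal.ofReal ((3 - φ) / (5 - 2 * φ)) := by
    simp only [hμ, hν, Measure.smul_apply, Measure.add_apply, smul_eq_mul,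
      z1, z2, z3, pp4, pp5, pp6, pp7, pp8, pp9, mul_zero, zero_add, add_zero]
    simp only [← ENNReal.ofReal_mul, ← ENNReal.ofReal_add, hφ0, hφ20, hφ30, h2φ20, hinv0,
      n4, n5, n6, n7, n8, n9, n56, d5, d6, d7]
    have hS2 : φ ^ 2 * (C1 - 0) + (φ ^ 3 * (M - C1) + φ ^ 3 * (B3 - M))
        + 2 * φ ^ 2 * (2 - B3) + φ ^ 2 * (C2 - 2) + φ * (β - C2) = 6 * φ + 2 := by
      simp only [hB1, hB2, hB3, hC1, hC2, hM]
      linear_combination (2 + 4 * φ + 4 * φ ^ 2 - φ ^ 2 * β) * hφ2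
    rw [hS2]
    congr 1
    rw [inv_mul_eq_div, div_eq_div_iff (by linarith) (by linarith)]
    linear_combination (-4) * hφ2
  -- the Lyapunov exponent integral
  have hzero : μ {(0:ℝ)} = 0 := hac (by simp)
  have hae : (fun x => Real.log |deriv T x|)
      =ᵐ[μ] (Set.Ioi (0:ℝ)).indicator fun _ => Real.log φ := by
    rw [Filter.EventuallyEq, ae_iff]
    refine measure_mono_null (fun x hx => ?_) hzero
    simp only [Set.mem_setOf_eq] at hx
    simp only [Set.mem_singleton_iff]
    by_contra hx0
    apply hx
    rcases lt_or_gt_of_ne hx0 with h | h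
    · have hev : T =ᶠ[nhds x] fun y => y + 2 := by
        filter_upwards [Iio_mem_nhds h] with y hy
        rw [hT]
        exact if_pos (le_of_lt hy)
      have hd : deriv T x = 1 := by
        rw [hev.deriv_eq]
        simpa using ((hasDerivAt_id x).add_const 2).deriv
      rw [hd, Set.indicator_of_notMem (by simpa using not_lt.mpr (le_of_lt h))]
      simp
    · have hev : T =ᶠ[nhds x] fun y => β - φ * y := by
        filter_upwards [Ioi_mem_nhds h] with y hy
        rw [hT]
        exact if_neg (not_le.mpr hy)
      have hd : deriv T x = -φ := by
        rw [hev.deriv_eq]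
        have hda : HasDerivAt (fun y : ℝ => β - φ * y) (-φ) x := by
          simpa using ((hasDerivAt_id x).const_mul φ).const_sub β
        exact hda.deriv
      rw [hd, Set.indicator_of_mem (Set.mem_Ioi.mpr h)]
      rw [abs_neg, abs_of_pos hφpos]
  have hnn : (0:ℝ) ≤ (3 - φ) / (5 - 2 * φ) := div_nonneg (by linarith) (by linarith)
  have hint : ∫ x, Real.log |deriv T x| ∂μ = ((3 - φ) / (5 - 2 * φ)) * Real.log φ := by
    rw [integral_congr_ae hae, integral_indicator_const (Real.log φ) measurableSet_Ioi,
      measureReal_def, hIoi, ENNReal.toReal_ofReal hnn, smul_eq_mul]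
  exact ⟨μ, ⟨hprob⟩, hmapT, hac, hint⟩
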